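/- Let G and H be finite graphs. If G and H have a common equitable partition, then G and H have the same iterated degree sequence, i.e., they are not distinguished by colour refinement (1-dimensional Weisfeiler-Leman). -/

import Mathlib

open Finset BigOperators

/-- The type of colours produced after `n` rounds of colour refinement. -/
def WLColor : ℕ → Type
  | 0 => Unit
  | n + 1 => WLColor n × Multiset (WLColor n)

/-- The colour refinement (1-dimensional Weisfeiler-Leman) colouring: `c₀` is constant
and `c_{n+1}(v) = (c_n(v), {{c_n(w) : w a neighbour of v}})`. -/
def wlColoring {V : Type*} [Fintype V] [DecidableEq V] (G : SimpleGraph V)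
    [DecidableRel G.Adj] : (n : ℕ) → V → WLColor n
  | 0, _ => ()
  | n + 1, v => (wlColoring G n v, (G.neighborFinset v).val.map (wlColoring G n))

/-- A colouring `c : V → I` of the vertices of a graph `G` is an equitable partition
with parameters `par` if every vertex of colour `i` has exactly `par i j` neighbours
of colour `j`. -/
def IsEquitable {V I : Type*} [Fintype V] [DecidableEq V] [DecidableEq I]
    (G : SimpleGraph V) [DecidableRel G.Adj] (c : V → I) (par : I → I → ℕ) : Prop :=
  ∀ (v : V) (j : I), ((G.neighborFinset v).filter (fun w => c w = j)).card = par (c v) j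

/-- Colour of a class after `n` rounds, determined by `par` only. -/
def classColor {k : ℕ} (par : Fin k → Fin k → ℕ) : (n : ℕ) → Fin k → WLColor n
  | 0, _ => ()
  | n + 1, i => (classColor par n i,
      ∑ j : Fin k, Multiset.replicate (par i j) (classColor par n j))

lemma map_eq_sum_replicate {V : Type*} {k : ℕ} (c : V → Fin k) (m : Multiset V)
    (f : Fin k → ℕ) (h : ∀ j, (m.filter (fun w => c w = j)).card = f j) :
    m.map c = ∑ j : Fin k, Multiset.replicate (f j) j := by
  ext j'
  rw [Multiset.count_map]
  simp only [Multiset.count_sum', Multiset.count_replicate]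
  rw [Finset.sum_eq_single j']
  · simp only [if_pos rfl]
    rw [← h j']
    congr 1
    apply Multiset.filter_congr
    intro a _
    exact eq_comm
  · intro b _ hb
    exact if_neg hb
  · simp

lemma multiset_map_finsum {α β I : Type*} (f : α → β) (s : Finset I) (g : I → Multiset α) :
    Multiset.map f (∑ i ∈ s, g i) = ∑ i ∈ s, (g i).map f := by
  classical
  induction s using Finset.induction with
  | empty => simp
  | insert _ _ h ih => simp [Finset.sum_insert h, ih]

lemma card_filter_val {V I : Type*} [DecidableEq I] (s : Finset V) (p : V → I) (j : I) :
    (Multiset.filter (fun w => p w = j) s.val).card = (s.filter (fun w => p w = j)).card := by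
  show _ = Multiset.card (s.filter _).val
  rw [Finset.filter_val]

lemma wl_eq_class {V : Type*} [Fintype V] [DecidableEq V] {k : ℕ}
    (G : SimpleGraph V) [DecidableRel G.Adj] (c : V → Fin k) (par : Fin k → Fin k → ℕ)
    (hE : IsEquitable G c par) : ∀ n v, wlColoring G n v = classColor par n (c v)
  | 0, _ => rfl
  | n + 1, v => by
    have ih := wl_eq_class G c par hE n
    show (_, _) = (_, _)
    rw [Prod.mk.injEq]
    refine ⟨ih v, ?_⟩
    have h1 : (G.neighborFinset v).val.map (wlColoring G n)
        = ((G.neighborFinset v).val.map c).map (classColor par n) := by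
      rw [Multiset.map_map]
      exact Multiset.map_congr rfl (fun w _ => ih w)
    have h2 : (G.neighborFinset v).val.map c
        = ∑ j : Fin k, Multiset.replicate (par (c v) j) j := by
      apply map_eq_sum_replicate
      intro j
      rw [← hE v j]
      exact card_filter_val _ _ _
    rw [h1, h2, multiset_map_finsum]
    simp [Multiset.map_replicate]

/-- If two finite graphs have a common equitable partition then they have the same
iterated degree sequence, i.e. colour refinement does not distinguish them. -/
theorem stmt5 {V W : Type*} [Fintype V] [Fintype W] [DecidableEq V] [DecidableEq W]
    (G : SimpleGraph V) (H : SimpleGraph W) [DecidableRel G.Adj] [DecidableRel H.Adj]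
    (hCEP : ∃ (k : ℕ) (cG : V → Fin k) (cH : W → Fin k) (par : Fin k → Fin k → ℕ),
      IsEquitable G cG par ∧ IsEquitable H cH par ∧
      ∀ i : Fin k,
        (Finset.univ.filter (fun v => cG v = i)).card =
          (Finset.univ.filter (fun w => cH w = i)).card) :
    ∀ n : ℕ,
      Multiset.map (wlColoring G n) Finset.univ.val =
        Multiset.map (wlColoring H n) Finset.univ.val := by
  obtain ⟨k, cG, cH, par, hG, hH, hcard⟩ := hCEP
  intro n
  have e1 : Multiset.map (wlColoring G n) (Finset.univ.val : Multiset V)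
      = ((Finset.univ.val : Multiset V).map cG).map (classColor par n) := by
    rw [Multiset.map_map]
    exact Multiset.map_congr rfl (fun v _ => wl_eq_class G cG par hG n v)
  have e2 : Multiset.map (wlColoring H n) (Finset.univ.val : Multiset W)
      = ((Finset.univ.val : Multiset W).map cH).map (classColor par n) := by
    rw [Multiset.map_map]
    exact Multiset.map_congr rfl (fun w _ => wl_eq_class H cH par hH n w)
  rw [e1, e2]
  congr 1
  rw [map_eq_sum_replicate cG _ (fun i => (Finset.univ.filter (fun v => cG v = i)).card)
      (fun j => card_filter_val _ _ _),
    map_eq_sum_replicate cH _ (fun i => (Finset.univ.filter (fun w => cH w = i)).card)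
      (fun j => card_filter_val _ _ _)]
  exact Finset.sum_congr rfl (fun i _ => by rw [hcard i])
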